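/- arXiv:2308.14680 — 2 statements merged into one kernel-verified Lean document; each statement's English description precedes it below -/
import Mathlib

section
/- Under the assumptions of the previous integration-by-parts identities, the quantity J₂ := ∫₀^∞ (|φ'(t)|² + (b₂t + ξ)²|φ(t)|²) t dt + ∫_{-∞}^0 (|φ'(t)|² + (b₁t + ξ)²|φ(t)|²) t dt equals β ∫_{-∞}^∞ |φ(t)|² t dt. -/
open Real MeasureTheory Set Filter Topology

lemma myIntegrable_comp_abs {f : ℝ → ℝ} (hf : IntegrableOn (fun x => f |x|) (Set.Ioi 0)) :
    Integrable (fun x => f |x|) := by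
  have int_Iic : IntegrableOn (fun x ↦ f |x|) (Set.Iic 0) := by
    rw [← Measure.map_neg_eq_self (volume : Measure ℝ)]
    let m : MeasurableEmbedding fun x : ℝ => -x := (Homeomorph.neg ℝ).measurableEmbedding
    rw [m.integrableOn_map_iff]
    simp_rw [Function.comp_def, abs_neg, Set.neg_preimage, Set.neg_Iic, neg_zero]
    exact Iff.mpr integrableOn_Ici_iff_integrableOn_Ioi hf
  rw [← integrableOn_univ, ← Set.Iic_union_Ioi (a := (0:ℝ))]
  exact int_Iic.union hf

lemma myIntegrable_exp_neg_abs {b : ℝ} (hb : 0 < b) :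
    Integrable (fun x : ℝ => Real.exp (-b * |x|)) :=
  myIntegrable_comp_abs (f := fun x => Real.exp (-b * x))
    (((exp_neg_integrableOn_Ioi 0 hb)).congr_fun
      (fun x hx => by rw [abs_of_pos hx]) measurableSet_Ioi)

lemma myIntegrable_of_le_exp {f : ℝ → ℝ} (hf : Continuous f) {K a : ℝ} (ha : 0 < a)
    (hb : ∀ t, |f t| ≤ K * (1 + |t|) ^ 4 * Real.exp (-a * |t|)) : Integrable f := by
  have hK : 0 ≤ K := le_trans (abs_nonneg (f 0)) (by simpa using hb 0)
  set c : ℝ := min 1 (a / 8) with hc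
  have hc0 : 0 < c := lt_min one_pos (by linarith)
  have hc1 : c ≤ 1 := min_le_left _ _
  have hc2 : 4 * c ≤ a / 2 := by
    have : c ≤ a / 8 := min_le_right _ _
    linarith
  have key : ∀ t, ‖f t‖ ≤ K * c⁻¹ ^ 4 * Real.exp (-(a / 2) * |t|) := by
    intro t
    have h1 : 1 + |t| ≤ c⁻¹ * Real.exp (c * |t|) := by
      have h2 : c * |t| + 1 ≤ Real.exp (c * |t|) := Real.add_one_le_exp _
      rw [← sub_nonneg]
      have hkey : c * (c⁻¹ * Real.exp (c * |t|) - (1 + |t|)) =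
          (Real.exp (c * |t|) - (c * |t| + 1)) + (1 - c) := by
        field_simp; ring
      nlinarith [h2, hc0, hc1, hkey]
    have h14 : (1 + |t|) ^ 4 ≤ (c⁻¹ * Real.exp (c * |t|)) ^ 4 := by
      apply pow_le_pow_left₀ (by positivity) h1
    have hexp4 : (c⁻¹ * Real.exp (c * |t|)) ^ 4 = c⁻¹ ^ 4 * Real.exp (4 * (c * |t|)) := by
      rw [mul_pow, ← Real.exp_nat_mul]; norm_num
    have hmono : Real.exp (4 * (c * |t|)) * Real.exp (-a * |t|) ≤ Real.exp (-(a / 2) * |t|) := by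
      rw [← Real.exp_add]
      apply Real.exp_le_exp.mpr
      nlinarith [abs_nonneg t]
    calc ‖f t‖ = |f t| := rfl
      _ ≤ K * (1 + |t|) ^ 4 * Real.exp (-a * |t|) := hb t
      _ ≤ K * (c⁻¹ ^ 4 * Real.exp (4 * (c * |t|))) * Real.exp (-a * |t|) := by
          rw [← hexp4]
          exact mul_le_mul_of_nonneg_right (mul_le_mul_of_nonneg_left h14 hK) (Real.exp_pos _).le
      _ = K * c⁻¹ ^ 4 * (Real.exp (4 * (c * |t|)) * Real.exp (-a * |t|)) := by ring
      _ ≤ K * c⁻¹ ^ 4 * Real.exp (-(a / 2) * |t|) := by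
          exact mul_le_mul_of_nonneg_left hmono (by positivity)
  exact ((myIntegrable_exp_neg_abs (by linarith : (0:ℝ) < a / 2)).const_mul
      (K * c⁻¹ ^ 4)).mono' hf.aestronglyMeasurable (Filter.Eventually.of_forall key)

set_option maxHeartbeats 1000000 in
/-- Under the hypotheses of the integration-by-parts identities, the quantity
`J₂ = ∫₀^∞ (φ'² + (b₂t+ξ)²φ²) t dt + ∫_{-∞}^0 (φ'² + (b₁t+ξ)²φ²) t dt`
equals `β ∫_{-∞}^∞ φ² t dt`. -/
theorem stmt6 (b₁ b₂ ξ β : ℝ) (φ : ℝ → ℝ)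
    (hC1 : ContDiff ℝ 1 φ)
    (hdecay : ∃ C a : ℝ, 0 < a ∧ ∀ t : ℝ,
      |φ t| ≤ C * Real.exp (-a * |t|) ∧ |deriv φ t| ≤ C * Real.exp (-a * |t|))
    (hnorm : (∫ t : ℝ, (φ t) ^ 2) = 1)
    (hodePos : ∀ t > (0 : ℝ), HasDerivAt (deriv φ) (((b₂ * t + ξ) ^ 2 - β) * φ t) t)
    (hodeNeg : ∀ t < (0 : ℝ), HasDerivAt (deriv φ) (((b₁ * t + ξ) ^ 2 - β) * φ t) t) :
    (∫ t in Set.Ioi (0 : ℝ), ((deriv φ t) ^ 2 + (b₂ * t + ξ) ^ 2 * (φ t) ^ 2) * t)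
      + (∫ t in Set.Iio (0 : ℝ), ((deriv φ t) ^ 2 + (b₁ * t + ξ) ^ 2 * (φ t) ^ 2) * t)
      = β * ∫ t : ℝ, (φ t) ^ 2 * t := by
  obtain ⟨C, a, ha, hCa⟩ := hdecay
  have hC : 0 ≤ C := le_trans (abs_nonneg (φ 0)) (by simpa using (hCa 0).1)
  have hφ : Continuous φ := hC1.continuous
  have hφ' : Continuous (deriv φ) := hC1.continuous_deriv le_rfl
  have hdφ : ∀ t, HasDerivAt φ (deriv φ t) t := fun t => (hC1.differentiable one_ne_zero t).hasDerivAt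
  have hE1 : ∀ t : ℝ, Real.exp (-a * |t|) ≤ 1 := by
    intro t
    rw [← Real.exp_zero]
    exact Real.exp_le_exp.mpr (by nlinarith [abs_nonneg t])
  have hsq : ∀ t, (φ t) ^ 2 ≤ C ^ 2 * Real.exp (-a * |t|) ∧
      (deriv φ t) ^ 2 ≤ C ^ 2 * Real.exp (-a * |t|) := by
    intro t
    obtain ⟨h1, h2⟩ := hCa t
    have hE0 := Real.exp_pos (-a * |t|)
    constructor
    · nlinarith [pow_le_pow_left₀ (abs_nonneg (φ t)) h1 2, sq_abs (φ t), hE1 t, hE0.le,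
        sq_nonneg C]
    · nlinarith [pow_le_pow_left₀ (abs_nonneg (deriv φ t)) h2 2, sq_abs (deriv φ t), hE1 t,
        hE0.le, sq_nonneg C]
  -- pointwise bounds for integrability
  have hbnd : ∀ b t : ℝ, |((deriv φ t) ^ 2 + (b * t + ξ) ^ 2 * (φ t) ^ 2) * t| ≤
      (C ^ 2 * (1 + (|b| + |ξ|) ^ 2)) * (1 + |t|) ^ 4 * Real.exp (-a * |t|) := by
    intro b t
    obtain ⟨hp, hq⟩ := hsq t
    have hE0 := Real.exp_pos (-a * |t|)
    have hEl := hE1 t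
    have hbt : (b * t + ξ) ^ 2 ≤ (|b| + |ξ|) ^ 2 * (1 + |t|) ^ 2 := by
      have h3 : |b * t + ξ| ≤ (|b| + |ξ|) * (1 + |t|) := by
        calc |b * t + ξ| ≤ |b * t| + |ξ| := abs_add_le _ _
          _ = |b| * |t| + |ξ| := by rw [abs_mul]
          _ ≤ (|b| + |ξ|) * (1 + |t|) := by nlinarith [abs_nonneg b, abs_nonneg ξ, abs_nonneg t]
      calc (b * t + ξ) ^ 2 = |b * t + ξ| ^ 2 := (sq_abs _).symm
        _ ≤ ((|b| + |ξ|) * (1 + |t|)) ^ 2 := pow_le_pow_left₀ (abs_nonneg _) h3 2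
        _ = (|b| + |ξ|) ^ 2 * (1 + |t|) ^ 2 := mul_pow _ _ 2
    have hs : |t| ≤ (1 + |t|) ^ 2 := by nlinarith [abs_nonneg t]
    rw [abs_mul, abs_of_nonneg (by positivity : (0:ℝ) ≤ (deriv φ t) ^ 2 + (b * t + ξ) ^ 2 * (φ t) ^ 2)]
    calc ((deriv φ t) ^ 2 + (b * t + ξ) ^ 2 * (φ t) ^ 2) * |t|
        ≤ ((C ^ 2 * Real.exp (-a * |t|)) + ((|b| + |ξ|) ^ 2 * (1 + |t|) ^ 2) *
            (C ^ 2 * Real.exp (-a * |t|))) * (1 + |t|) ^ 2 :=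
          mul_le_mul (add_le_add hq (mul_le_mul hbt hp (sq_nonneg _) (by positivity))) hs
            (abs_nonneg t) (by positivity)
      _ = (C ^ 2 * (1 + (|b| + |ξ|) ^ 2 * (1 + |t|) ^ 2) * (1 + |t|) ^ 2) *
            Real.exp (-a * |t|) := by ring
      _ ≤ (C ^ 2 * ((1 + (|b| + |ξ|) ^ 2) * (1 + |t|) ^ 4)) * Real.exp (-a * |t|) := by
          apply mul_le_mul_of_nonneg_right ?_ hE0.le
          have hu : (1:ℝ) ≤ (1 + |t|) ^ 2 := by nlinarith [abs_nonneg t]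
          nlinarith [mul_nonneg (sq_nonneg C) (mul_nonneg
            (by positivity : (0:ℝ) ≤ (1 + |t|) ^ 2) (sub_nonneg.mpr hu)),
            mul_nonneg (mul_nonneg (sq_nonneg C) (sq_nonneg (|b| + |ξ|)))
              (mul_nonneg (by positivity : (0:ℝ) ≤ (1 + |t|) ^ 2) (sub_nonneg.mpr hu))]
      _ = (C ^ 2 * (1 + (|b| + |ξ|) ^ 2)) * (1 + |t|) ^ 4 * Real.exp (-a * |t|) := by ring
  have hbndq : ∀ t : ℝ, |(φ t) ^ 2 * t| ≤ C ^ 2 * (1 + |t|) ^ 4 * Real.exp (-a * |t|) := by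
    intro t
    obtain ⟨hp, -⟩ := hsq t
    have hE0 := Real.exp_pos (-a * |t|)
    have hs4 : |t| ≤ (1 + |t|) ^ 4 := by
      nlinarith [abs_nonneg t, pow_nonneg (abs_nonneg t) 2, pow_nonneg (abs_nonneg t) 3,
        pow_nonneg (abs_nonneg t) 4]
    rw [abs_mul, abs_of_nonneg (sq_nonneg (φ t))]
    calc (φ t) ^ 2 * |t| ≤ (C ^ 2 * Real.exp (-a * |t|)) * (1 + |t|) ^ 4 :=
          mul_le_mul hp hs4 (abs_nonneg t) (by positivity)
      _ = C ^ 2 * (1 + |t|) ^ 4 * Real.exp (-a * |t|) := by ring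
  have hInt : ∀ b : ℝ, Integrable (fun t => ((deriv φ t) ^ 2 + (b * t + ξ) ^ 2 * (φ t) ^ 2) * t) := by
    intro b
    refine myIntegrable_of_le_exp ?_ ha (hbnd b)
    exact ((hφ'.pow 2).add ((((continuous_const.mul continuous_id).add continuous_const).pow 2).mul
      (hφ.pow 2))).mul continuous_id
  have hIntq : Integrable (fun t => (φ t) ^ 2 * t) :=
    myIntegrable_of_le_exp ((hφ.pow 2).mul continuous_id) ha hbndq
  -- the primitive F
  set F : ℝ → ℝ := fun t => φ t * deriv φ t * t - (φ t) ^ 2 / 2 with hFdef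
  have hFc : Continuous F := ((hφ.mul hφ').mul continuous_id).sub ((hφ.pow 2).div_const 2)
  have hFderiv : ∀ (b t : ℝ), HasDerivAt (deriv φ) (((b * t + ξ) ^ 2 - β) * φ t) t →
      HasDerivAt F (((deriv φ t) ^ 2 + (b * t + ξ) ^ 2 * (φ t) ^ 2) * t -
        β * ((φ t) ^ 2 * t)) t := by
    intro b t hode
    have h1 : HasDerivAt (fun s => φ s * deriv φ s * s)
        ((deriv φ t * deriv φ t + φ t * (((b * t + ξ) ^ 2 - β) * φ t)) * t +
          φ t * deriv φ t * 1) t := ((hdφ t).mul hode).mul (hasDerivAt_id t)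
    have h2 : HasDerivAt (fun s => (φ s) ^ 2 / 2)
        (((2 : ℕ) * (φ t) ^ (2 - 1) * deriv φ t) / 2) t := ((hdφ t).pow 2).div_const 2
    have h3 := h1.sub h2
    refine h3.congr_deriv ?_
    push_cast
    ring
  have hF0 : F 0 = -(φ 0) ^ 2 / 2 := by simp [hFdef]; ring
  -- limits of F at ±∞
  have hHtop : Tendsto (fun s : ℝ => C ^ 2 * ((1 + s) * Real.exp (-a * s))) atTop (𝓝 0) := by
    have hmt : Tendsto (fun s : ℝ => a * s) atTop atTop := tendsto_id.const_mul_atTop ha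
    have h1 : Tendsto (fun s : ℝ => Real.exp (-a * s)) atTop (𝓝 0) := by
      have := Real.tendsto_exp_atBot.comp (tendsto_neg_atTop_atBot.comp hmt)
      simpa [Function.comp_def, neg_mul] using this
    have h2 : Tendsto (fun s : ℝ => s * Real.exp (-a * s)) atTop (𝓝 0) := by
      have h3 := (tendsto_pow_mul_exp_neg_atTop_nhds_zero 1).comp hmt
      have h4 : (fun s : ℝ => s * Real.exp (-a * s)) =
          fun s => a⁻¹ * ((a * s) ^ 1 * Real.exp (-(a * s))) := by
        funext s
        rw [pow_one, neg_mul]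
        field_simp
      rw [h4]
      simpa using (h3.const_mul a⁻¹)
    have h5 : (fun s : ℝ => C ^ 2 * ((1 + s) * Real.exp (-a * s))) =
        fun s => C ^ 2 * (Real.exp (-a * s) + s * Real.exp (-a * s)) := by
      funext s; ring
    rw [h5]
    simpa using (h1.add h2).const_mul (C ^ 2)
  have hFbound : ∀ t, ‖F t‖ ≤ C ^ 2 * ((1 + |t|) * Real.exp (-a * |t|)) := by
    intro t
    obtain ⟨h1, h2⟩ := hCa t
    have hE0 := Real.exp_pos (-a * |t|)
    have hEl := hE1 t
    have htri : |φ t * deriv φ t * t - (φ t) ^ 2 / 2| ≤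
        |φ t * deriv φ t * t| + |(φ t) ^ 2 / 2| := abs_sub _ _
    have e1 : |φ t * deriv φ t * t| = |φ t| * |deriv φ t| * |t| := by rw [abs_mul, abs_mul]
    have e2 : |(φ t) ^ 2 / 2| = (φ t) ^ 2 / 2 := abs_of_nonneg (by positivity)
    rw [e1, e2] at htri
    have hAB : |φ t| * |deriv φ t| ≤ (C * Real.exp (-a * |t|)) * (C * Real.exp (-a * |t|)) :=
      mul_le_mul h1 h2 (abs_nonneg _) (by positivity)
    have hE2 : Real.exp (-a * |t|) * Real.exp (-a * |t|) ≤ Real.exp (-a * |t|) := by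
      nlinarith
    simp only [Real.norm_eq_abs, hFdef]
    nlinarith [htri, mul_le_mul_of_nonneg_right hAB (abs_nonneg t), hE2, abs_nonneg t,
      (hsq t).1, sq_abs (φ t), mul_nonneg (mul_nonneg (abs_nonneg (φ t))
        (abs_nonneg (deriv φ t))) (abs_nonneg t), sq_nonneg C,
      mul_le_mul_of_nonneg_left hE2 (mul_nonneg (sq_nonneg C) (abs_nonneg t))]
  have hFtop : Tendsto F atTop (𝓝 0) :=
    squeeze_zero_norm hFbound (hHtop.comp tendsto_abs_atTop_atTop)
  have hFbot : Tendsto F atBot (𝓝 0) :=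
    squeeze_zero_norm hFbound (hHtop.comp tendsto_abs_atBot_atTop)
  -- integrable derivatives
  have hg₂int : Integrable (fun t => ((deriv φ t) ^ 2 + (b₂ * t + ξ) ^ 2 * (φ t) ^ 2) * t -
      β * ((φ t) ^ 2 * t)) := (hInt b₂).sub (hIntq.const_mul β)
  have hg₁int : Integrable (fun t => ((deriv φ t) ^ 2 + (b₁ * t + ξ) ^ 2 * (φ t) ^ 2) * t -
      β * ((φ t) ^ 2 * t)) := (hInt b₁).sub (hIntq.const_mul β)
  -- FTC on (0, ∞)
  have hI2 : (∫ t in Set.Ioi (0:ℝ), (((deriv φ t) ^ 2 + (b₂ * t + ξ) ^ 2 * (φ t) ^ 2) * t -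
      β * ((φ t) ^ 2 * t))) = (φ 0) ^ 2 / 2 := by
    have h := integral_Ioi_of_hasDerivAt_of_tendsto (a := 0) (m := 0)
      hFc.continuousWithinAt (fun x hx => hFderiv b₂ x (hodePos x hx))
      hg₂int.integrableOn hFtop
    rw [h, hF0]
    ring
  -- FTC on (-∞, 0) via reflection
  have hI1 : (∫ t in Set.Iio (0:ℝ), (((deriv φ t) ^ 2 + (b₁ * t + ξ) ^ 2 * (φ t) ^ 2) * t -
      β * ((φ t) ^ 2 * t))) = -(φ 0) ^ 2 / 2 := by
    set g₁ : ℝ → ℝ := fun t => ((deriv φ t) ^ 2 + (b₁ * t + ξ) ^ 2 * (φ t) ^ 2) * t -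
      β * ((φ t) ^ 2 * t) with hg₁def
    have hGderiv : ∀ x ∈ Set.Ioi (0:ℝ), HasDerivAt (fun y => F (-y)) (-(g₁ (-x))) x := by
      intro x hx
      have hneg : (-x : ℝ) < 0 := by simpa using hx.out
      have h := hFderiv b₁ (-x) (hodeNeg (-x) hneg)
      have h2 := h.comp x (hasDerivAt_neg x)
      refine h2.congr_deriv ?_
      simp only [hg₁def]
      ring
    have hGint : IntegrableOn (fun x => -(g₁ (-x))) (Set.Ioi (0:ℝ)) :=
      (hg₁int.comp_neg.neg).integrableOn
    have hGtop : Tendsto (fun x => F (-x)) atTop (𝓝 0) := hFbot.comp tendsto_neg_atTop_atBot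
    have hGcont : ContinuousWithinAt (fun x => F (-x)) (Set.Ici 0) 0 :=
      (hFc.comp continuous_neg).continuousWithinAt
    have h6 := integral_Ioi_of_hasDerivAt_of_tendsto (a := 0) (m := 0)
      hGcont hGderiv hGint hGtop
    have h7 : (∫ x in Set.Ioi (0:ℝ), -(g₁ (-x))) = -∫ x in Set.Ioi (0:ℝ), g₁ (-x) :=
      MeasureTheory.integral_neg _
    have h8 : (∫ x in Set.Ioi (0:ℝ), g₁ (-x)) = ∫ x in Set.Iic (0:ℝ), g₁ x := by
      simpa using integral_comp_neg_Ioi 0 g₁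
    have h9 : F (-0) = F 0 := by norm_num
    rw [h7, h8] at h6
    rw [← integral_Iic_eq_integral_Iio]
    have h10 : (∫ x in Set.Iic (0:ℝ), g₁ x) = F (-0) := by linarith [h6]
    rw [h10, h9, hF0]
  -- split the integrals
  have split2 : (∫ t in Set.Ioi (0:ℝ), ((deriv φ t) ^ 2 + (b₂ * t + ξ) ^ 2 * (φ t) ^ 2) * t)
      = (∫ t in Set.Ioi (0:ℝ), (((deriv φ t) ^ 2 + (b₂ * t + ξ) ^ 2 * (φ t) ^ 2) * t -
        β * ((φ t) ^ 2 * t))) + β * ∫ t in Set.Ioi (0:ℝ), (φ t) ^ 2 * t := by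
    rw [← MeasureTheory.integral_const_mul β, ← MeasureTheory.integral_add
      hg₂int.integrableOn ((hIntq.const_mul β).integrableOn)]
    congr 1
    funext t
    ring
  have split1 : (∫ t in Set.Iio (0:ℝ), ((deriv φ t) ^ 2 + (b₁ * t + ξ) ^ 2 * (φ t) ^ 2) * t)
      = (∫ t in Set.Iio (0:ℝ), (((deriv φ t) ^ 2 + (b₁ * t + ξ) ^ 2 * (φ t) ^ 2) * t -
        β * ((φ t) ^ 2 * t))) + β * ∫ t in Set.Iio (0:ℝ), (φ t) ^ 2 * t := by
    rw [← MeasureTheory.integral_const_mul β, ← MeasureTheory.integral_add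
      hg₁int.integrableOn ((hIntq.const_mul β).integrableOn)]
    congr 1
    funext t
    ring
  have hsplit : (∫ t in Set.Iio (0:ℝ), (φ t) ^ 2 * t) + (∫ t in Set.Ioi (0:ℝ), (φ t) ^ 2 * t)
      = ∫ t : ℝ, (φ t) ^ 2 * t := by
    rw [← integral_Ici_eq_integral_Ioi]
    exact intervalIntegral.integral_Iio_add_Ici hIntq.integrableOn hIntq.integrableOn
  rw [split2, split1, hI2, hI1, ← hsplit, mul_add]
  ring
end

section
/- With η₊ as above, the quantity (-δM + 2‖η₊'‖²_{L²(ℝ₊)}) / (2‖η₊‖²_{L²(ℝ₊)}) equals -(M²/4)δ² + O(δ³) as δ → 0⁺, for fixed M > 0 and ε > 0. -/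
open Real Asymptotics Topology

/-- With `‖η₊‖²_{L²(ℝ₊)} = ε + 1/(Mδ)` and `‖η₊'‖²_{L²(ℝ₊)} = Mδ/4`, the quantity
`(-δM + 2‖η₊'‖²)/(2‖η₊‖²)` equals `-(M²/4)δ² + O(δ³)` as `δ → 0⁺`. -/
theorem stmt12 (M ε : ℝ) (hM : 0 < M) (hε : 0 < ε) :
    (fun δ : ℝ => (-δ * M + 2 * (M * δ / 4)) / (2 * (ε + 1 / (M * δ)))
        - (-(M ^ 2 / 4) * δ ^ 2))
      =O[𝓝[>] (0 : ℝ)] (fun δ : ℝ => δ ^ 3) := by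
  rw [isBigO_iff]
  refine ⟨ε * M ^ 3 / 4, ?_⟩
  filter_upwards [self_mem_nhdsWithin] with δ (hδ : 0 < δ)
  have hMδ : (0:ℝ) < M * δ := mul_pos hM hδ
  have hden : (0:ℝ) < 4 * ε * M * δ + 4 := by positivity
  have key : (-δ * M + 2 * (M * δ / 4)) / (2 * (ε + 1 / (M * δ)))
        - (-(M ^ 2 / 4) * δ ^ 2) = ε * M ^ 3 * δ ^ 3 / (4 * ε * M * δ + 4) := by
    field_simp
    ring
  rw [key]
  have h1 : |ε * M ^ 3 * δ ^ 3 / (4 * ε * M * δ + 4)| = ε * M ^ 3 * δ ^ 3 / (4 * ε * M * δ + 4) := by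
    rw [abs_of_nonneg]; positivity
  have h2 : ‖δ ^ 3‖ = δ ^ 3 := by
    rw [Real.norm_eq_abs, abs_of_nonneg]; positivity
  rw [Real.norm_eq_abs, h1, h2]
  rw [div_le_iff₀ hden]
  nlinarith [mul_pos (mul_pos (mul_pos hε (pow_pos hM 3)) (pow_pos hδ 3)) hMδ]
end
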